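/- arXiv:1101.0164 — 2 statements merged into one kernel-verified Lean document; each statement's English description precedes it below -/
import Mathlib

section
/- Let Ψ : [0, σ₀] → [0, ∞) be a nondecreasing function. Then there exist nondecreasing continuously differentiable functions Ψ⁻, Ψ⁺ : [0, σ₀] → [0, ∞) with Ψ⁻(σ) ≤ Ψ(σ) ≤ Ψ⁺(σ) for all σ ∈ [0, σ₀], such that: (1) if σ ↦ Ψ(σ)/σ² is integrable on (0, σ₀], then σ ↦ (Ψ⁺)'(σ)/σ is integrable on (0, σ₀]; and (2) if σ ↦ Ψ(σ)/σ² is not integrable on (0, σ₀], then σ ↦ (Ψ⁻)'(σ)/σ is not integrable on (0, σ₀]. -/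
open MeasureTheory Real Set Filter intervalIntegral
open scoped Topology

set_option linter.unusedSectionVars false
set_option maxHeartbeats 1000000

namespace Statement6Aux

noncomputable def sm (F : ℝ → ℝ) : ℝ → ℝ := fun x => 2 * ∫ u in (1/2 : ℝ)..1, F (x * u)

noncomputable def smD (F : ℝ → ℝ) : ℝ → ℝ := fun x =>
  if x ≤ 0 then 0 else (2 * (sm F x - (1/2) * sm F (x/2)) - sm (sm F) x) / x

section Smooth

variable {F : ℝ → ℝ}

lemma ii_comp (hm : Monotone F) (x a b : ℝ) :
    IntervalIntegrable (fun u => F (x * u)) volume a b := by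
  rcases le_total 0 x with hx | hx
  · exact Monotone.intervalIntegrable fun u v huv => hm (mul_le_mul_of_nonneg_left huv hx)
  · exact Antitone.intervalIntegrable fun u v huv => hm (mul_le_mul_of_nonpos_left huv hx)

variable (hm : Monotone F) (hnn : ∀ x, 0 ≤ F x) (hneg : ∀ x ≤ 0, F x = 0)

include hm hnn hneg

lemma sm_nonpos : ∀ x ≤ 0, sm F x = 0 := by
  intro x hx
  have h : EqOn (fun u => F (x * u)) (fun _ => (0:ℝ)) (uIcc (1/2 : ℝ) 1) := by
    intro u hu
    rw [uIcc_of_le (by norm_num)] at hu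
    exact hneg _ (mul_nonpos_of_nonpos_of_nonneg hx (by linarith [hu.1]))
  have h2 : (∫ u in (1/2 : ℝ)..1, F (x * u)) = ∫ _u in (1/2 : ℝ)..1, (0:ℝ) :=
    intervalIntegral.integral_congr h
  simp only [sm, h2, intervalIntegral.integral_zero, mul_zero]

lemma sm_nonneg : ∀ x, 0 ≤ sm F x := by
  intro x
  have : (0:ℝ) ≤ ∫ u in (1/2 : ℝ)..1, F (x * u) :=
    intervalIntegral.integral_nonneg (by norm_num) (fun u _ => hnn _)
  simp only [sm]; linarith

lemma sm_mono : Monotone (sm F) := by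
  intro x y hxy
  rcases le_total x 0 with hx | hx
  · rw [sm_nonpos hm hnn hneg x hx]; exact sm_nonneg hm hnn hneg y
  · have h : ∀ u ∈ Icc (1/2 : ℝ) 1, F (x * u) ≤ F (y * u) := fun u hu =>
      hm (mul_le_mul_of_nonneg_right hxy (by linarith [hu.1]))
    have h2 := intervalIntegral.integral_mono_on (by norm_num : (1/2:ℝ) ≤ 1)
      (ii_comp hm x _ _) (ii_comp hm y _ _) h
    simp only [sm]; linarith

lemma sm_le : ∀ x, sm F x ≤ F x := by
  intro x
  rcases le_total x 0 with hx | hx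
  · rw [sm_nonpos hm hnn hneg x hx, hneg x hx]
  · have h : ∀ u ∈ Icc (1/2 : ℝ) 1, F (x * u) ≤ F x := fun u hu =>
      hm (by nlinarith [hu.1, hu.2])
    have h2 := intervalIntegral.integral_mono_on (by norm_num : (1/2:ℝ) ≤ 1)
      (ii_comp hm x _ _) (intervalIntegrable_const) h
    rw [intervalIntegral.integral_const, smul_eq_mul] at h2
    simp only [sm]
    nlinarith

lemma sm_ge : ∀ x, 0 ≤ x → F (x/2) ≤ sm F x := by
  intro x hx
  have h : ∀ u ∈ Icc (1/2 : ℝ) 1, F (x/2) ≤ F (x * u) := fun u hu =>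
    hm (by nlinarith [hu.1, hu.2])
  have h2 := intervalIntegral.integral_mono_on (by norm_num : (1/2:ℝ) ≤ 1)
    (intervalIntegrable_const) (ii_comp hm x _ _) h
  rw [intervalIntegral.integral_const, smul_eq_mul] at h2
  simp only [sm]
  nlinarith

omit hnn hneg in
lemma sm_eq (x : ℝ) (hx : 0 < x) :
    sm F x = 2 * ((∫ t in (0:ℝ)..x, F t) - ∫ t in (0:ℝ)..(x/2), F t) / x := by
  have h1 : (∫ u in (1/2 : ℝ)..1, F (x * u)) = x⁻¹ • ∫ t in (x*(1/2))..(x*1), F t :=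
    intervalIntegral.integral_comp_mul_left (fun t => F t) (ne_of_gt hx)
  have h2 : ((∫ t in (0:ℝ)..x, F t) - ∫ t in (0:ℝ)..(x/2), F t) = ∫ t in (x/2)..x, F t :=
    intervalIntegral.integral_interval_sub_left (hm.intervalIntegrable) (hm.intervalIntegrable)
  rw [sm, h1, h2]
  rw [smul_eq_mul]
  have : x * (1/2) = x / 2 := by ring
  rw [this, mul_one]
  field_simp

omit hnn hneg in
lemma sm_contOn : ContinuousOn (sm F) (Ioi 0) := by
  have hP : Continuous fun y => ∫ t in (0:ℝ)..y, F t :=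
    intervalIntegral.continuous_primitive (fun a b => hm.intervalIntegrable) 0
  have h : ContinuousOn (fun x => 2 * ((∫ t in (0:ℝ)..x, F t) - ∫ t in (0:ℝ)..(x/2), F t) / x)
      (Ioi 0) := by
    apply ContinuousOn.div
    · exact (continuous_const.mul ((hP).sub (hP.comp (continuous_id.div_const 2)))).continuousOn
    · exact continuousOn_id
    · intro x hx; exact ne_of_gt hx
  exact (h.congr (fun x hx => sm_eq hm x hx))

/-- the key derivative computation -/
lemma phi_hasDeriv (x : ℝ) (hx : 0 < x) : HasDerivAt (sm (sm F)) (smD F x) x := by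
  have gm := sm_mono hm hnn hneg
  have gnn := sm_nonneg hm hnn hneg
  set g := sm F with hg
  set P : ℝ → ℝ := fun y => ∫ t in (0:ℝ)..y, g t with hP
  have hPd : ∀ y : ℝ, 0 < y → HasDerivAt P (g y) y := by
    intro y hy
    refine intervalIntegral.integral_hasDerivAt_right (gm.intervalIntegrable) ?_ ?_
    · exact ⟨univ, univ_mem, by
        simpa using (gm.measurable.stronglyMeasurable).aestronglyMeasurable⟩
    · exact (sm_contOn hm).continuousAt (Ioi_mem_nhds hy)
  have hd1 : HasDerivAt (fun y => P y - P (y/2)) (g x - g (x/2) * (1/2)) x := by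
    refine (hPd x hx).sub ?_
    have h2 : HasDerivAt (fun y : ℝ => y / 2) (1/2 : ℝ) x := by
      simpa using (hasDerivAt_id x).div_const 2
    exact (hPd (x/2) (by linarith)).comp x h2
  have hd2 : HasDerivAt (fun y => 2 * (P y - P (y/2)) / y)
      (((2 * (g x - g (x/2) * (1/2))) * x - (2 * (P x - P (x/2))) * 1) / x ^ 2) x := by
    exact (hd1.const_mul 2).div (hasDerivAt_id x) (ne_of_gt hx)
  have heq : (fun y => 2 * (P y - P (y/2)) / y) =ᶠ[𝓝 x] sm g := by
    filter_upwards [Ioi_mem_nhds hx] with y hy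
    exact (sm_eq gm y hy).symm
  have hDval : ((2 * (g x - g (x/2) * (1/2))) * x - (2 * (P x - P (x/2))) * 1) / x ^ 2
      = smD F x := by
    have hΦ : sm g x = 2 * (P x - P (x/2)) / x := sm_eq gm x hx
    rw [smD]
    rw [if_neg (not_le.mpr hx)]
    rw [hΦ]
    field_simp
    ring
  rw [← hDval]
  exact hd2.congr_of_eventuallyEq heq.symm

lemma phi_le : ∀ x, sm (sm F) x ≤ F x := fun x =>
  (sm_le (sm_mono hm hnn hneg) (sm_nonneg hm hnn hneg) (sm_nonpos hm hnn hneg) x).trans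
    (sm_le hm hnn hneg x)

lemma phi_ge : ∀ x, 0 ≤ x → F (x/4) ≤ sm (sm F) x := by
  intro x hx
  have h1 : F ((x/2)/2) ≤ sm F (x/2) := sm_ge hm hnn hneg (x/2) (by linarith)
  have h2 : sm F (x/2) ≤ sm (sm F) x :=
    sm_ge (sm_mono hm hnn hneg) (sm_nonneg hm hnn hneg) (sm_nonpos hm hnn hneg) x hx
  have : (x/2)/2 = x/4 := by ring
  rw [this] at h1
  linarith

lemma smD_nonneg : ∀ x, 0 ≤ smD F x := by
  intro x
  rw [smD]
  rcases le_or_gt x 0 with hx | hx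
  · rw [if_pos hx]
  · rw [if_neg (not_le.mpr hx)]
    apply div_nonneg _ (le_of_lt hx)
    have h1 : sm (sm F) x ≤ sm F x := sm_le (sm_mono hm hnn hneg) (sm_nonneg hm hnn hneg)
      (sm_nonpos hm hnn hneg) x
    have h2 : sm F (x/2) ≤ sm F x := sm_mono hm hnn hneg (by linarith)
    have h3 := sm_nonneg hm hnn hneg (x/2)
    linarith

lemma smD_le : ∀ x, 0 < x → smD F x ≤ 2 * F x / x := by
  intro x hx
  rw [smD, if_neg (not_le.mpr hx)]
  rw [div_le_div_iff_of_pos_right hx]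
  have h1 := sm_le hm hnn hneg x
  have h2 := sm_nonneg hm hnn hneg (x/2)
  have h3 := sm_nonneg (sm_mono hm hnn hneg) (sm_nonneg hm hnn hneg) (sm_nonpos hm hnn hneg) x
  linarith


lemma phi_zero : sm (sm F) 0 = 0 :=
  sm_nonpos (sm_mono hm hnn hneg) (sm_nonneg hm hnn hneg) (sm_nonpos hm hnn hneg) 0 le_rfl

variable (hδ : ∀ c, 0 < c → ∃ δ, 0 < δ ∧ ∀ σ, 0 < σ → σ ≤ δ → F σ ≤ c * σ)

include hδ

lemma phi_derivZero : HasDerivWithinAt (sm (sm F)) 0 (Ici (0:ℝ)) 0 := by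
  rw [hasDerivWithinAt_iff_tendsto_slope]
  have hs : Ici (0:ℝ) \ {0} = Ioi 0 := by
    ext y; simp [mem_diff, lt_iff_le_and_ne, and_comm, eq_comm]
  rw [hs]
  rw [Metric.tendsto_nhdsWithin_nhds]
  intro ε hε
  obtain ⟨δ, hδpos, hδ'⟩ := hδ (ε/2) (by linarith)
  refine ⟨δ, hδpos, ?_⟩
  intro x hx hdist
  have hx0 : 0 < x := hx
  have hxδ : x ≤ δ := by
    rw [Real.dist_eq, sub_zero, abs_of_pos hx0] at hdist
    linarith
  have h1 : sm (sm F) x ≤ (ε/2) * x := (phi_le hm hnn hneg x).trans (hδ' x hx0 hxδ)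
  have h2 : 0 ≤ sm (sm F) x :=
    sm_nonneg (sm_mono hm hnn hneg) (sm_nonneg hm hnn hneg) (sm_nonpos hm hnn hneg) x
  rw [slope_def_field, phi_zero hm hnn hneg, Real.dist_eq, sub_zero, sub_zero, sub_zero]
  rw [abs_of_nonneg (div_nonneg h2 hx0.le)]
  rw [div_lt_iff₀ hx0]
  nlinarith

lemma smD_contOn : ContinuousOn (smD F) (Ici (0:ℝ)) := by
  intro x hx
  rcases eq_or_lt_of_le (mem_Ici.mp hx) with hx0 | hx0
  · -- continuity at 0
    rw [Metric.continuousWithinAt_iff]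
    intro ε hε
    obtain ⟨δ, hδpos, hδ'⟩ := hδ (ε/4) (by linarith)
    refine ⟨δ, hδpos, ?_⟩
    intro y hy hdist
    have h0 : smD F x = 0 := by rw [smD, if_pos (le_of_eq hx0.symm)]
    rw [h0, Real.dist_eq, sub_zero]
    rcases le_or_gt y 0 with hy0 | hy0
    · rw [smD, if_pos hy0]; simpa using hε
    · have hyδ : y ≤ δ := by
        rw [Real.dist_eq, ← hx0, sub_zero, abs_of_pos hy0] at hdist
        linarith
      have hb := smD_le hm hnn hneg y hy0
      have hnn' := smD_nonneg hm hnn hneg y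
      rw [abs_of_nonneg hnn']
      have hF : F y ≤ (ε/4) * y := hδ' y hy0 hyδ
      have : 2 * F y / y ≤ ε/2 := by
        rw [div_le_iff₀ hy0]
        nlinarith
      linarith
  · -- continuity at x > 0
    have gm := sm_mono hm hnn hneg
    have hcg : ContinuousAt (sm F) x := (sm_contOn hm).continuousAt (Ioi_mem_nhds hx0)
    have hhalf : ContinuousAt (fun y : ℝ => y/2) x := (continuous_id.div_const 2).continuousAt
    have hcg2 : ContinuousAt (fun y : ℝ => sm F (y/2)) x :=
      ContinuousAt.comp (g := sm F) (f := fun y : ℝ => y/2) (x := x)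
        ((sm_contOn hm).continuousAt (Ioi_mem_nhds (show (0:ℝ) < x/2 by linarith))) hhalf
    have hcΦ : ContinuousAt (sm (sm F)) x := (phi_hasDeriv hm hnn hneg x hx0).continuousAt
    have hmul : ContinuousAt (fun y => (1/2 : ℝ) * sm F (y/2)) x := hcg2.const_mul _
    have hnum : ContinuousAt (fun y => 2 * (sm F y - (1/2) * sm F (y/2)) - sm (sm F) y) x :=
      ((hcg.sub hmul).const_mul 2).sub hcΦ
    have hform : ContinuousAt
        (fun y => (2 * (sm F y - (1/2) * sm F (y/2)) - sm (sm F) y) / y) x :=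
      hnum.div continuousAt_id (ne_of_gt hx0)
    have heq : smD F =ᶠ[𝓝 x] fun y => (2 * (sm F y - (1/2) * sm F (y/2)) - sm (sm F) y) / y := by
      filter_upwards [Ioi_mem_nhds hx0] with y hy
      rw [smD, if_neg (not_le.mpr hy)]
    exact (hform.congr heq.symm).continuousWithinAt


omit hδ in
lemma smD_contOn_pos : ContinuousOn (smD F) (Ioi (0:ℝ)) := by
  intro x hx0
  have hcg : ContinuousAt (sm F) x := (sm_contOn hm).continuousAt (Ioi_mem_nhds hx0)
  have hhalf : ContinuousAt (fun y : ℝ => y/2) x := (continuous_id.div_const 2).continuousAt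
  have hcg2 : ContinuousAt (fun y : ℝ => sm F (y/2)) x :=
    ContinuousAt.comp (g := sm F) (f := fun y : ℝ => y/2) (x := x)
      ((sm_contOn hm).continuousAt (Ioi_mem_nhds (show (0:ℝ) < x/2 by
        simp only [mem_Ioi] at hx0; linarith))) hhalf
  have hx0' : (0:ℝ) < x := hx0
  have hcΦ : ContinuousAt (sm (sm F)) x := (phi_hasDeriv hm hnn hneg x hx0').continuousAt
  have hmul : ContinuousAt (fun y => (1/2 : ℝ) * sm F (y/2)) x := hcg2.const_mul _
  have hnum : ContinuousAt (fun y => 2 * (sm F y - (1/2) * sm F (y/2)) - sm (sm F) y) x :=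
    ((hcg.sub hmul).const_mul 2).sub hcΦ
  have hform : ContinuousAt
      (fun y => (2 * (sm F y - (1/2) * sm F (y/2)) - sm (sm F) y) / y) x :=
    hnum.div continuousAt_id (ne_of_gt hx0')
  have heq : smD F =ᶠ[𝓝 x] fun y => (2 * (sm F y - (1/2) * sm F (y/2)) - sm (sm F) y) / y := by
    filter_upwards [Ioi_mem_nhds hx0'] with y hy
    rw [smD, if_neg (not_le.mpr hy)]
  exact (hform.congr heq.symm).continuousWithinAt

omit hδ in
lemma phi_contOn_pos : ContinuousOn (sm (sm F)) (Ioi (0:ℝ)) :=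
  sm_contOn (sm_mono hm hnn hneg)

omit hδ in
lemma phi_byparts (a b : ℝ) (ha : 0 < a) (hab : a ≤ b) :
    (∫ x in a..b, smD F x / x) =
      sm (sm F) b / b - sm (sm F) a / a + ∫ x in a..b, sm (sm F) x / x^2 := by
  have hu : uIcc a b = Icc a b := uIcc_of_le hab
  have hder : ∀ x ∈ uIcc a b,
      HasDerivAt (fun y => sm (sm F) y / y) (smD F x / x - sm (sm F) x / x^2) x := by
    intro x hx
    rw [hu] at hx
    have hx0 : 0 < x := lt_of_lt_of_le ha hx.1
    have h : HasDerivAt (fun y => sm (sm F) y / y)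
        ((smD F x * x - sm (sm F) x * 1) / x ^ 2) x :=
      (phi_hasDeriv hm hnn hneg x hx0).div (hasDerivAt_id x) (ne_of_gt hx0)
    convert h using 1
    rw [mul_one, sub_div, pow_two, mul_div_mul_right _ _ (ne_of_gt hx0)]
  have hsub : Icc a b ⊆ Ioi (0:ℝ) := fun x hx => lt_of_lt_of_le ha hx.1
  have hc1 : ContinuousOn (fun x => smD F x / x) (Icc a b) :=
    ((smD_contOn_pos hm hnn hneg).mono hsub).div continuousOn_id
      (fun x hx => ne_of_gt (lt_of_lt_of_le ha hx.1))
  have hc2 : ContinuousOn (fun x => sm (sm F) x / x^2) (Icc a b) :=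
    ((phi_contOn_pos hm hnn hneg).mono hsub).div ((continuous_pow 2).continuousOn)
      (fun x hx => pow_ne_zero 2 (ne_of_gt (lt_of_lt_of_le ha hx.1)))
  have hint : IntervalIntegrable (fun x => smD F x / x - sm (sm F) x / x^2) volume a b := by
    apply ContinuousOn.intervalIntegrable
    rw [hu]; exact hc1.sub hc2
  have hftc := intervalIntegral.integral_eq_sub_of_hasDerivAt hder hint
  have hi1 : IntervalIntegrable (fun x => smD F x / x) volume a b := by
    apply ContinuousOn.intervalIntegrable; rw [hu]; exact hc1
  have hi2 : IntervalIntegrable (fun x => sm (sm F) x / x^2) volume a b := by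
    apply ContinuousOn.intervalIntegrable; rw [hu]; exact hc2
  rw [intervalIntegral.integral_sub hi1 hi2] at hftc
  linarith

end Smooth

lemma ii_div_sq {G : ℝ → ℝ} (hG : Monotone G) (a b : ℝ) (ha : 0 < a) (hab : a ≤ b) :
    IntervalIntegrable (fun x => G x / x^2) volume a b := by
  have h : (fun x => G x / x^2) = fun x => G x * (x^2)⁻¹ :=
    funext fun x => div_eq_mul_inv _ _
  rw [h]
  apply (hG.intervalIntegrable).mul_continuousOn
  apply ContinuousOn.inv₀ ((continuous_pow 2).continuousOn)
  intro x hx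
  rw [uIcc_of_le hab] at hx
  exact pow_ne_zero 2 (ne_of_gt (lt_of_lt_of_le ha hx.1))

lemma integrableOn_of_bdd {b M : ℝ} {h : ℝ → ℝ}
    (hnn : ∀ x, 0 ≤ h x)
    (hloc : ∀ ε, 0 < ε → IntegrableOn h (Ioc ε b))
    (hbdd : ∀ ε, 0 < ε → ε ≤ b → (∫ x in Ioc ε b, h x) ≤ M) :
    IntegrableOn h (Ioc (0:ℝ) b) := by
  rcases le_or_gt b 0 with hb | hb
  · rw [Ioc_eq_empty (not_lt.mpr hb)]
    exact integrableOn_empty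
  · have hM0 : (0:ℝ) ≤ M := by
      have := hbdd b hb le_rfl
      simpa [Ioc_eq_empty (lt_irrefl b)] using this
    apply integrableOn_Ioc_of_intervalIntegral_norm_bounded
      (a := fun n : ℕ => b/(n+1)) (b := fun _ : ℕ => b) (l := atTop)
    · intro n
      exact hloc _ (by positivity)
    · have h0 := tendsto_const_div_atTop_nhds_zero_nat b
      have h1 := h0.comp (tendsto_add_atTop_nat 1)
      have heq : ((fun n : ℕ => b / (n:ℝ)) ∘ fun a => a + 1) = fun n : ℕ => b/((n:ℝ)+1) := by
        funext n; simp only [Function.comp]; push_cast; ring_nf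
      rwa [heq] at h1
    · exact tendsto_const_nhds
    · apply Filter.Eventually.of_forall
      intro n
      have heq : (∫ x in Ioc (b/(n+1)) b, ‖h x‖) = ∫ x in Ioc (b/(n+1)) b, h x :=
        setIntegral_congr_fun measurableSet_Ioc (fun x _ => norm_of_nonneg (hnn x))
      rw [heq]
      rcases le_or_gt (b/(n+1)) b with hle | hlt
      · exact hbdd _ (by positivity) hle
      · rw [Ioc_eq_empty (not_lt.mpr hlt.le)]
        simpa using hM0


lemma phi_P1 {F : ℝ → ℝ} (hm : Monotone F) (hnn : ∀ x, 0 ≤ F x) (hneg : ∀ x ≤ 0, F x = 0)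
    {σ₀ M : ℝ} (hσ₀ : 0 < σ₀)
    (hM : ∀ ε, 0 < ε → ε ≤ σ₀ → (∫ x in ε..σ₀, F x / x^2) ≤ M) :
    IntegrableOn (fun x => smD F x / x) (Ioc 0 σ₀) := by
  have hphinn : ∀ x, 0 ≤ sm (sm F) x :=
    sm_nonneg (sm_mono hm hnn hneg) (sm_nonneg hm hnn hneg) (sm_nonpos hm hnn hneg)
  have hphim : Monotone (sm (sm F)) :=
    sm_mono (sm_mono hm hnn hneg) (sm_nonneg hm hnn hneg) (sm_nonpos hm hnn hneg)
  apply integrableOn_of_bdd (M := sm (sm F) σ₀/σ₀ + M)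
  · intro x
    rcases le_or_gt x 0 with hx | hx
    · rw [smD, if_pos hx, zero_div]
    · exact div_nonneg (smD_nonneg hm hnn hneg x) hx.le
  · intro ε hε
    rcases le_or_gt ε σ₀ with hle | hlt
    · have hc : ContinuousOn (fun x => smD F x / x) (Icc ε σ₀) :=
        ((smD_contOn_pos hm hnn hneg).mono
          (fun x hx => lt_of_lt_of_le hε hx.1)).div continuousOn_id
          (fun x hx => ne_of_gt (lt_of_lt_of_le hε hx.1))
      exact (hc.integrableOn_Icc).mono_set Ioc_subset_Icc_self
    · rw [Ioc_eq_empty (not_lt.mpr hlt.le)]; exact integrableOn_empty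
  · intro ε hε hεσ
    rw [← intervalIntegral.integral_of_le hεσ]
    rw [phi_byparts hm hnn hneg ε σ₀ hε hεσ]
    have h1 : 0 ≤ sm (sm F) ε / ε := div_nonneg (hphinn ε) hε.le
    have h2 : (∫ x in ε..σ₀, sm (sm F) x / x^2) ≤ ∫ x in ε..σ₀, F x/x^2 := by
      apply intervalIntegral.integral_mono_on hεσ (ii_div_sq hphim ε σ₀ hε hεσ)
        (ii_div_sq hm ε σ₀ hε hεσ)
      intro x hx
      have hx0 : 0 < x := lt_of_lt_of_le hε hx.1
      exact (div_le_div_iff_of_pos_right (by positivity)).mpr (phi_le hm hnn hneg x)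
    have h3 := hM ε hε hεσ
    linarith

lemma phi_P2 {F : ℝ → ℝ} (hm : Monotone F) (hnn : ∀ x, 0 ≤ F x) (hneg : ∀ x ≤ 0, F x = 0)
    (hδ : ∀ c, 0 < c → ∃ δ, 0 < δ ∧ ∀ σ, 0 < σ → σ ≤ δ → F σ ≤ c * σ)
    {σ₀ : ℝ} (hσ₀ : 0 < σ₀)
    (hI : IntegrableOn (fun x => smD F x / x) (Ioc 0 σ₀)) :
    ∃ M, ∀ ε, 0 < ε → ε ≤ σ₀/4 → (∫ x in ε..σ₀/4, F x / x^2) ≤ M := by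
  have hphinn : ∀ x, 0 ≤ sm (sm F) x :=
    sm_nonneg (sm_mono hm hnn hneg) (sm_nonneg hm hnn hneg) (sm_nonpos hm hnn hneg)
  have hphim : Monotone (sm (sm F)) :=
    sm_mono (sm_mono hm hnn hneg) (sm_nonneg hm hnn hneg) (sm_nonpos hm hnn hneg)
  have hm4 : Monotone (fun x : ℝ => F (x/4)) := fun x y hxy => hm (by linarith)
  set S := ∫ x in Ioc (0:ℝ) σ₀, smD F x / x with hS
  obtain ⟨δ₁, hδ₁pos, hδ₁⟩ := hδ 1 one_pos
  set δ := min δ₁ σ₀ with hδdef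
  have hδpos : 0 < δ := lt_min hδ₁pos hσ₀
  have hsmDnn : ∀ x, 0 ≤ smD F x / x := by
    intro x
    rcases le_or_gt x 0 with hx | hx
    · rw [smD, if_pos hx, zero_div]
    · exact div_nonneg (smD_nonneg hm hnn hneg x) hx.le
  have hintle : ∀ ε, 0 < ε → ε ≤ σ₀ → (∫ x in ε..σ₀, smD F x / x) ≤ S := by
    intro ε hε hεσ
    rw [intervalIntegral.integral_of_le hεσ]
    apply setIntegral_mono_set hI (Filter.Eventually.of_forall hsmDnn)
    exact HasSubset.Subset.eventuallyLE (Ioc_subset_Ioc_left hε.le)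
  have key : ∀ ε, 0 < ε → ε ≤ δ → (∫ x in ε..σ₀, sm (sm F) x / x^2) ≤ 1 + S := by
    intro ε hε hεδ
    have hεσ : ε ≤ σ₀ := le_trans hεδ (min_le_right _ _)
    have hbp := phi_byparts hm hnn hneg ε σ₀ hε hεσ
    have h1 : sm (sm F) ε / ε ≤ 1 := by
      have hFε : F ε ≤ 1 * ε := hδ₁ ε hε (le_trans hεδ (min_le_left _ _))
      have := (phi_le hm hnn hneg ε).trans hFε
      rw [div_le_one hε]
      linarith
    have h2 : 0 ≤ sm (sm F) σ₀ / σ₀ := div_nonneg (hphinn σ₀) hσ₀.le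
    have h3 := hintle ε hε hεσ
    linarith
  have key2 : ∀ ε, 0 < ε → ε ≤ δ → (∫ x in ε..σ₀, F (x/4) / x^2) ≤ 1 + S := by
    intro ε hε hεδ
    have hεσ : ε ≤ σ₀ := le_trans hεδ (min_le_right _ _)
    refine le_trans ?_ (key ε hε hεδ)
    apply intervalIntegral.integral_mono_on hεσ (ii_div_sq hm4 ε σ₀ hε hεσ)
      (ii_div_sq hphim ε σ₀ hε hεσ)
    intro x hx
    have hx0 : 0 < x := lt_of_lt_of_le hε hx.1
    exact (div_le_div_iff_of_pos_right (by positivity)).mpr (phi_ge hm hnn hneg x hx0.le)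
  have hsub : ∀ ε, 0 < ε → ε ≤ σ₀ →
      (∫ x in ε..σ₀, F (x/4) / x^2) = (1/4) * ∫ u in (ε/4)..(σ₀/4), F u / u^2 := by
    intro ε hε hεσ
    have hpt : ∀ x : ℝ, F (x/4) / x^2 = (1/16) * ((fun u => F u / u^2) (x/4)) := by
      intro x
      rcases eq_or_ne x 0 with hx | hx
      · simp [hx]
      · have : (x/4)^2 = x^2/16 := by ring
        simp only [this]
        rw [div_div_eq_mul_div]
        field_simp
    have h1 : (∫ x in ε..σ₀, F (x/4) / x^2)
        = ∫ x in ε..σ₀, (1/16) * ((fun u => F u / u^2) (x/4)) := by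
      apply intervalIntegral.integral_congr
      intro x _
      exact hpt x
    rw [h1, intervalIntegral.integral_const_mul]
    rw [intervalIntegral.integral_comp_div (fun u => F u / u^2) (by norm_num : (4:ℝ) ≠ 0)]
    rw [smul_eq_mul]
    ring
  refine ⟨4 * (1 + S), ?_⟩
  intro ε hε hεq
  set ε' := min ε (δ/4) with hε'def
  have hε'pos : 0 < ε' := lt_min hε (by linarith)
  have hε'le : ε' ≤ ε := min_le_left _ _
  have h4ε' : 0 < 4 * ε' := by linarith
  have h4δ : 4 * ε' ≤ δ := by
    have := min_le_right ε (δ/4)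
    simp only [hε'def]
    linarith [min_le_right ε (δ/4)]
  have h4σ : 4 * ε' ≤ σ₀ := le_trans h4δ (min_le_right _ _)
  have hkey := key2 (4*ε') h4ε' h4δ
  rw [hsub (4*ε') h4ε' h4σ] at hkey
  have h44 : (4 * ε')/4 = ε' := by ring
  rw [h44] at hkey
  -- (∫ u in ε'..σ₀/4, F u/u²) ≤ 4(1+S), and ∫ over [ε, σ₀/4] ≤ ∫ over [ε', σ₀/4]
  have hεσ4 : ε ≤ σ₀/4 := hεq
  have hii1 : IntervalIntegrable (fun u => F u / u^2) volume ε' ε :=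
    ii_div_sq hm ε' ε hε'pos hε'le
  have hii2 : IntervalIntegrable (fun u => F u / u^2) volume ε (σ₀/4) :=
    ii_div_sq hm ε (σ₀/4) hε hεσ4
  have hadd := intervalIntegral.integral_add_adjacent_intervals hii1 hii2
  have hnn1 : 0 ≤ ∫ u in ε'..ε, F u / u^2 := by
    apply intervalIntegral.integral_nonneg hε'le
    intro u _
    exact div_nonneg (hnn u) (sq_nonneg u)
  have : (∫ u in ε..σ₀/4, F u / u^2) ≤ ∫ u in ε'..σ₀/4, F u / u^2 := by
    rw [← hadd]; linarith
  have hfin : (1/4 : ℝ) * (∫ u in ε'..σ₀/4, F u / u^2) ≤ 1 + S := hkey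
  linarith


lemma staircase_exists {f : ℝ → ℝ} (hf : Monotone f) (hfnn : ∀ x, 0 ≤ f x)
    {σ₀ c : ℝ} (hσ₀ : 0 < σ₀) (hc : 0 < c)
    (H : ∀ δ, 0 < δ → ∃ τ, 0 < τ ∧ τ ≤ δ ∧ c * τ ≤ f τ) :
    ∃ G : ℝ → ℝ, Monotone G ∧ (∀ x, 0 ≤ G x) ∧ (∀ x ≤ 0, G x = 0) ∧ (∀ x, G x ≤ f x) ∧
      (∀ c', 0 < c' → ∃ δ, 0 < δ ∧ ∀ σ, 0 < σ → σ ≤ δ → G σ ≤ c' * σ) ∧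
      ¬ (∃ M, ∀ ε, 0 < ε → ε ≤ σ₀/4 → (∫ x in ε..(σ₀/4), G x / x^2) ≤ M) := by
  classical
  -- the pick function
  set pick : ℝ → ℝ := fun δ => if h : 0 < δ then Classical.choose (H δ h) else 1 with hpick
  have hpick1 : ∀ δ, 0 < δ → 0 < pick δ ∧ pick δ ≤ δ ∧ c * pick δ ≤ f (pick δ) := by
    intro δ hδ
    simp only [hpick, dif_pos hδ]
    exact Classical.choose_spec (H δ hδ)
  -- the sequence
  set τ : ℕ → ℝ := fun k => Nat.rec (pick (σ₀/8)) (fun _ p => pick (p/2)) k with hτ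
  have hτ0eq : τ 0 = pick (σ₀/8) := rfl
  have hτsucc : ∀ k, τ (k+1) = pick (τ k / 2) := fun k => rfl
  have hτpos : ∀ k, 0 < τ k := by
    intro k
    induction k with
    | zero => exact (hpick1 (σ₀/8) (by linarith)).1
    | succ n ih => rw [hτsucc]; exact (hpick1 (τ n / 2) (by linarith)).1
  have hτ0le : τ 0 ≤ σ₀/8 := (hpick1 (σ₀/8) (by linarith)).2.1
  have hτhalf : ∀ k, τ (k+1) ≤ τ k / 2 := by
    intro k
    rw [hτsucc]
    exact (hpick1 (τ k / 2) (by linarith [hτpos k])).2.1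
  have hτf : ∀ k, c * τ k ≤ f (τ k) := by
    intro k
    cases k with
    | zero => exact (hpick1 (σ₀/8) (by linarith)).2.2
    | succ n => rw [hτsucc]; exact (hpick1 (τ n / 2) (by linarith [hτpos n])).2.2
  have hτlt : ∀ k, τ (k+1) < τ k := fun k =>
    lt_of_le_of_lt (hτhalf k) (by linarith [hτpos k])
  have hτanti : StrictAnti τ := strictAnti_nat_of_succ_lt hτlt
  have hτgeo : ∀ k, τ k ≤ (σ₀/8) * (1/2)^k := by
    intro k
    induction k with
    | zero => simpa using hτ0le
    | succ n ih =>
        have := hτhalf n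
        have h2 : ((1:ℝ)/2)^(n+1) = (1/2)^n * (1/2) := by ring
        rw [h2]
        nlinarith
  have hτsmall : ∀ x, 0 < x → ∃ N, τ N < x := by
    intro x hx
    obtain ⟨N, hN⟩ := exists_pow_lt_of_lt_one (show 0 < x / (σ₀/8) by positivity)
      (by norm_num : (1:ℝ)/2 < 1)
    refine ⟨N, lt_of_le_of_lt (hτgeo N) ?_⟩
    have h8 : 0 < σ₀/8 := by linarith
    calc (σ₀/8) * (1/2)^N < (σ₀/8) * (x / (σ₀/8)) := by
          apply mul_lt_mul_of_pos_left hN h8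
      _ = x := by field_simp
  -- the staircase function
  set G : ℝ → ℝ := fun σ =>
    if h : ∃ k, τ k ≤ σ then c * τ (Nat.find h) / (Nat.find h + 1) else 0 with hG
  have hGval : ∀ σ (h : ∃ k, τ k ≤ σ), G σ = c * τ (Nat.find h) / (Nat.find h + 1) := by
    intro σ h; simp only [hG]; rw [dif_pos h]
  have hGnn : ∀ x, 0 ≤ G x := by
    intro x
    simp only [hG]
    by_cases h : ∃ k, τ k ≤ x
    · rw [dif_pos h]
      have := hτpos (Nat.find h)
      positivity
    · rw [dif_neg h]
  have hGmono : Monotone G := by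
    intro x y hxy
    by_cases hx : ∃ k, τ k ≤ x
    · have hy : ∃ k, τ k ≤ y := ⟨Nat.find hx, le_trans (Nat.find_spec hx) hxy⟩
      rw [hGval x hx, hGval y hy]
      have hfind : Nat.find hy ≤ Nat.find hx :=
        Nat.find_mono (fun n hn => le_trans hn hxy)
      apply div_le_div₀ (mul_nonneg hc.le (hτpos (Nat.find hy)).le)
        (mul_le_mul_of_nonneg_left (hτanti.antitone hfind) hc.le)
        (by positivity)
      · push_cast; linarith [(Nat.cast_le (α := ℝ)).mpr hfind]
    · simp only [hG]; rw [dif_neg hx]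
      exact hGnn y
  have hGneg : ∀ x ≤ 0, G x = 0 := by
    intro x hx
    simp only [hG]
    rw [dif_neg]
    rintro ⟨k, hk⟩
    linarith [hτpos k]
  have hGle : ∀ x, G x ≤ f x := by
    intro x
    by_cases hx : ∃ k, τ k ≤ x
    · rw [hGval x hx]
      set k := Nat.find hx
      have hτk := hτpos k
      have h1 : c * τ k / (k + 1) ≤ c * τ k := by
        apply div_le_self (by positivity)
        push_cast
        linarith [Nat.cast_nonneg (α := ℝ) k]
      exact h1.trans ((hτf k).trans (hf (Nat.find_spec hx)))
    · simp only [hG]; rw [dif_neg hx]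
      exact hfnn x
  have hGδ : ∀ c', 0 < c' → ∃ δ, 0 < δ ∧ ∀ σ, 0 < σ → σ ≤ δ → G σ ≤ c' * σ := by
    intro c' hc'
    obtain ⟨m, hm⟩ := exists_nat_gt (c / c')
    refine ⟨τ m, hτpos m, ?_⟩
    intro σ hσ hσm
    by_cases hx : ∃ k, τ k ≤ σ
    · rw [hGval σ hx]
      have hfind : m ≤ Nat.find hx := by
        by_contra hcon
        push_neg at hcon
        have := hτanti hcon
        linarith [Nat.find_spec hx]
      have h1 : c * τ (Nat.find hx) / (Nat.find hx + 1) ≤ c * σ / (m + 1) := by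
        apply div_le_div₀ (by positivity)
          (mul_le_mul_of_nonneg_left (le_trans (Nat.find_spec hx) le_rfl) hc.le)
          (by positivity)
        push_cast
        have := (Nat.cast_le (α := ℝ)).mpr hfind
        linarith
      refine h1.trans ?_
      rw [div_le_iff₀ (by positivity)]
      have hcc : c ≤ c' * (m+1) := by
        rw [div_lt_iff₀ hc'] at hm
        nlinarith
      nlinarith
    · simp only [hG]; rw [dif_neg hx]
      exact mul_nonneg hc'.le hσ.le
  -- lower bound on blocks
  have hGlow : ∀ k, ∀ σ, τ k ≤ σ → c * τ k / (k + 1) ≤ G σ := by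
    intro k σ hσ
    have hx : ∃ j, τ j ≤ σ := ⟨k, hσ⟩
    rw [hGval σ hx]
    have hfind : Nat.find hx ≤ k := Nat.find_min' hx hσ
    have hτfx := hτpos (Nat.find hx)
    apply div_le_div₀ (by positivity)
      (mul_le_mul_of_nonneg_left (hτanti.antitone hfind) hc.le) (by positivity)
    push_cast
    have := (Nat.cast_le (α := ℝ)).mpr hfind
    linarith
  refine ⟨G, hGmono, hGnn, hGneg, hGle, hGδ, ?_⟩
  -- non-boundedness
  rintro ⟨M, hM⟩
  -- block estimate
  have hblock : ∀ k : ℕ, (c/2) * (1/(k+1)) ≤ ∫ x in (τ k)..(2*τ k), G x / x^2 := by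
    intro k
    have hτk := hτpos k
    have hle : τ k ≤ 2 * τ k := by linarith
    have hconst : ∀ x ∈ Icc (τ k) (2*τ k), (c * τ k / (k+1)) / x^2 ≤ G x / x^2 := by
      intro x hx
      have hx0 : 0 < x := lt_of_lt_of_le hτk hx.1
      exact (div_le_div_iff_of_pos_right (by positivity)).mpr (hGlow k x hx.1)
    have hii1 : IntervalIntegrable (fun x => (c * τ k / (k+1)) / x^2) volume (τ k) (2*τ k) :=
      ii_div_sq monotone_const _ _ hτk hle
    have hii2 : IntervalIntegrable (fun x => G x / x^2) volume (τ k) (2*τ k) :=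
      ii_div_sq hGmono _ _ hτk hle
    have hmono := intervalIntegral.integral_mono_on hle hii1 hii2 hconst
    -- compute the constant integral via FTC
    have hftc : (∫ x in (τ k)..(2*τ k), (c * τ k / (k+1)) / x^2)
        = (c/2) * (1/(k+1)) := by
      have hder : ∀ x ∈ uIcc (τ k) (2*τ k),
          HasDerivAt (fun y => -(c * τ k / (k+1)) * y⁻¹) ((c * τ k / (k+1)) / x^2) x := by
        intro x hx
        rw [uIcc_of_le hle] at hx
        have hx0 : 0 < x := lt_of_lt_of_le hτk hx.1
        have : HasDerivAt (fun y => -(c * τ k / (k+1)) * y⁻¹)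
            (-(c * τ k / (k+1)) * -(x ^ 2)⁻¹) x :=
          (hasDerivAt_inv (ne_of_gt hx0)).const_mul (-(c * τ k / (k+1)))
        convert this using 1
        ring
      have hii : IntervalIntegrable (fun x => (c * τ k / (k+1)) / x^2) volume (τ k) (2*τ k) :=
        hii1
      rw [intervalIntegral.integral_eq_sub_of_hasDerivAt hder hii]
      have h1 : τ k ≠ 0 := ne_of_gt hτk
      field_simp
      ring
    linarith [hmono, hftc.ge]
  -- chaining
  have hτleσ4 : ∀ k, 2 * τ k ≤ σ₀/4 := by
    intro k
    have h1 : τ k ≤ τ 0 := hτanti.antitone (Nat.zero_le k)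
    linarith
  have hchain : ∀ K : ℕ, (∑ i ∈ Finset.range (K+1), (c/2) * (1/(i+1)))
      ≤ ∫ x in (τ K)..(σ₀/4), G x / x^2 := by
    intro K
    induction K with
    | zero =>
        have h1 := hblock 0
        have hadd := intervalIntegral.integral_add_adjacent_intervals
          (ii_div_sq hGmono (τ 0) (2*τ 0) (hτpos 0) (by linarith [hτpos 0]))
          (ii_div_sq hGmono (2*τ 0) (σ₀/4) (by linarith [hτpos 0]) (hτleσ4 0))
        have h2 : 0 ≤ ∫ x in (2*τ 0)..(σ₀/4), G x / x^2 := by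
          apply intervalIntegral.integral_nonneg (hτleσ4 0)
          intro u _
          exact div_nonneg (hGnn u) (sq_nonneg u)
        norm_num [Finset.sum_range_one]
        push_cast
        rw [← hadd]
        norm_num at h1 ⊢
        linarith
    | succ n ih =>
        have hp := hτpos (n+1)
        have h2τ : 2 * τ (n+1) ≤ τ n := by linarith [hτhalf n]
        have hτn4 : τ n ≤ σ₀/4 := by linarith [hτleσ4 n, hτpos n]
        have hadd1 := intervalIntegral.integral_add_adjacent_intervals
          (ii_div_sq hGmono (τ (n+1)) (2*τ (n+1)) hp (by linarith))
          (ii_div_sq hGmono (2*τ (n+1)) (τ n) (by linarith) h2τ)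
        have hadd2 := intervalIntegral.integral_add_adjacent_intervals
          ((ii_div_sq hGmono (τ (n+1)) (2*τ (n+1)) hp (by linarith)).trans
            (ii_div_sq hGmono (2*τ (n+1)) (τ n) (by linarith) h2τ))
          (ii_div_sq hGmono (τ n) (σ₀/4) (hτpos n) hτn4)
        have h3 : 0 ≤ ∫ x in (2*τ (n+1))..(τ n), G x / x^2 := by
          apply intervalIntegral.integral_nonneg h2τ
          intro u _
          exact div_nonneg (hGnn u) (sq_nonneg u)
        have hb := hblock (n+1)
        rw [Finset.sum_range_succ]
        push_cast
        rw [← hadd2, ← hadd1]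
        push_cast at ih hb ⊢
        linarith
  -- harmonic divergence
  have hharm := Real.tendsto_sum_range_one_div_nat_succ_atTop
  obtain ⟨n, hn⟩ := (hharm.eventually_ge_atTop ((M + 1) / (c/2))).exists
  have hKbound := hchain n
  have hMn := hM (τ n) (hτpos n) (by linarith [hτleσ4 n, hτpos n])
  have hsum : (∑ i ∈ Finset.range (n+1), (c/2) * (1/(i+1)))
      ≥ (c/2) * ((M+1)/(c/2)) := by
    have hmono : (∑ i ∈ Finset.range n, (1/(i+1) : ℝ))
        ≤ ∑ i ∈ Finset.range (n+1), (1/(i+1) : ℝ) := by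
      apply Finset.sum_le_sum_of_subset_of_nonneg (Finset.range_subset_range.mpr (Nat.le_succ n))
      intro i _ _
      positivity
    have h4 : (∑ i ∈ Finset.range (n+1), (c/2) * (1/(i+1)))
        = (c/2) * ∑ i ∈ Finset.range (n+1), (1/(i+1) : ℝ) := by
      rw [Finset.mul_sum]
    rw [h4]
    have hc2 : (0:ℝ) < c/2 := by linarith
    push_cast at hn hmono ⊢
    nlinarith
  have hceq : (c/2) * ((M+1)/(c/2)) = M + 1 := by
    rw [mul_comm, div_mul_cancel₀ _ (ne_of_gt (show (0:ℝ) < c/2 by linarith))]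
  linarith


lemma phi_package {F : ℝ → ℝ} (hm : Monotone F) (hnn : ∀ x, 0 ≤ F x) (hneg : ∀ x ≤ 0, F x = 0)
    (hδ : ∀ c, 0 < c → ∃ δ, 0 < δ ∧ ∀ σ, 0 < σ → σ ≤ δ → F σ ≤ c * σ)
    {σ₀ : ℝ} (hσ₀ : 0 < σ₀) :
    MonotoneOn (sm (sm F)) (Icc 0 σ₀) ∧ (∀ σ ∈ Icc (0:ℝ) σ₀, 0 ≤ sm (sm F) σ) ∧
    (∀ σ ∈ Icc (0:ℝ) σ₀, HasDerivWithinAt (sm (sm F)) (smD F σ) (Icc 0 σ₀) σ) ∧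
    ContinuousOn (smD F) (Icc 0 σ₀) := by
  have hphinn : ∀ x, 0 ≤ sm (sm F) x :=
    sm_nonneg (sm_mono hm hnn hneg) (sm_nonneg hm hnn hneg) (sm_nonpos hm hnn hneg)
  have hphim : Monotone (sm (sm F)) :=
    sm_mono (sm_mono hm hnn hneg) (sm_nonneg hm hnn hneg) (sm_nonpos hm hnn hneg)
  refine ⟨hphim.monotoneOn _, fun σ _ => hphinn σ, ?_, (smD_contOn hm hnn hneg hδ).mono
    (fun x hx => hx.1)⟩
  intro σ hσ
  rcases eq_or_lt_of_le hσ.1 with h0 | h0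
  · have hD0 : smD F σ = 0 := by rw [smD, if_pos (le_of_eq h0.symm)]
    rw [hD0, ← h0]
    exact (phi_derivZero hm hnn hneg hδ).mono Icc_subset_Ici_self
  · exact (phi_hasDeriv hm hnn hneg σ h0).hasDerivWithinAt

end Statement6Aux

open Statement6Aux

/-- Lemma 2.4. -/
theorem statement6 (σ₀ : ℝ) (hσ₀ : 0 < σ₀) (Ψ : ℝ → ℝ)
    (hmono : MonotoneOn Ψ (Set.Icc 0 σ₀))
    (hnonneg : ∀ σ ∈ Set.Icc (0 : ℝ) σ₀, 0 ≤ Ψ σ) :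
    ∃ Ψm Ψp Ψm' Ψp' : ℝ → ℝ,
      MonotoneOn Ψm (Set.Icc 0 σ₀) ∧ MonotoneOn Ψp (Set.Icc 0 σ₀) ∧
      (∀ σ ∈ Set.Icc (0 : ℝ) σ₀, 0 ≤ Ψm σ) ∧
      (∀ σ ∈ Set.Icc (0 : ℝ) σ₀, HasDerivWithinAt Ψm (Ψm' σ) (Set.Icc 0 σ₀) σ) ∧
      (∀ σ ∈ Set.Icc (0 : ℝ) σ₀, HasDerivWithinAt Ψp (Ψp' σ) (Set.Icc 0 σ₀) σ) ∧
      ContinuousOn Ψm' (Set.Icc 0 σ₀) ∧ ContinuousOn Ψp' (Set.Icc 0 σ₀) ∧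
      (∀ σ ∈ Set.Icc (0 : ℝ) σ₀, Ψm σ ≤ Ψ σ ∧ Ψ σ ≤ Ψp σ) ∧
      (IntegrableOn (fun σ => Ψ σ / σ ^ 2) (Set.Ioc 0 σ₀) →
        IntegrableOn (fun σ => Ψp' σ / σ) (Set.Ioc 0 σ₀)) ∧
      (¬ IntegrableOn (fun σ => Ψ σ / σ ^ 2) (Set.Ioc 0 σ₀) →
        ¬ IntegrableOn (fun σ => Ψm' σ / σ) (Set.Ioc 0 σ₀)) := by
  classical
  set B := Ψ σ₀ with hB
  set f : ℝ → ℝ := fun x => Ψ (max 0 (min x σ₀)) with hf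
  have hclamp : ∀ x, max 0 (min x σ₀) ∈ Icc (0:ℝ) σ₀ := fun x =>
    ⟨le_max_left _ _, max_le hσ₀.le (min_le_right x σ₀)⟩
  have hfΨ : ∀ σ ∈ Icc (0:ℝ) σ₀, f σ = Ψ σ := by
    intro σ hσ
    simp only [hf]
    rw [min_eq_left hσ.2, max_eq_right hσ.1]
  have hfmono : Monotone f := fun x y hxy =>
    hmono (hclamp x) (hclamp y) (max_le_max le_rfl (min_le_min_right _ hxy))
  have hfnn : ∀ x, 0 ≤ f x := fun x => hnonneg _ (hclamp x)
  have hfB : ∀ x, f x ≤ B := fun x => hmono (hclamp x) ⟨hσ₀.le, le_rfl⟩ (hclamp x).2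
  have hEq : EqOn (fun σ => Ψ σ / σ ^ 2) (fun σ => f σ / σ ^ 2) (Ioc 0 σ₀) := by
    intro σ hσ
    simp only
    rw [hfΨ σ ⟨hσ.1.le, hσ.2⟩]
  -- trivial zero function integrable on anything
  have hzero : IntegrableOn (fun σ : ℝ => (0:ℝ) / σ) (Ioc 0 σ₀) := by
    have : (fun σ : ℝ => (0:ℝ) / σ) = fun _ => (0:ℝ) := funext fun σ => zero_div σ
    rw [this]
    exact integrableOn_zero
  by_cases hlim : ∀ c, 0 < c → ∃ δ, 0 < δ ∧ ∀ σ, 0 < σ → σ ≤ δ → f σ ≤ c * σ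
  · -- CASE II : f(σ)/σ → 0
    have hf0 : f 0 = 0 := by
      have h1 : ∀ ε, 0 < ε → f 0 ≤ ε := by
        intro ε hε
        obtain ⟨δ, hδpos, hδ⟩ := hlim 1 one_pos
        have h2 := hδ (min δ ε) (lt_min hδpos hε) (min_le_left _ _)
        have h3 : f 0 ≤ f (min δ ε) := hfmono (le_min hδpos.le hε.le)
        have := min_le_right δ ε
        nlinarith
      by_contra hne
      have hpos : 0 < f 0 := lt_of_le_of_ne (hfnn 0) (Ne.symm hne)
      linarith [h1 (f 0 / 2) (by linarith)]
    have hfneg : ∀ x ≤ 0, f x = 0 := fun x hx =>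
      le_antisymm (hf0 ▸ hfmono hx) (hfnn x)
    by_cases hInt : IntegrableOn (fun σ => Ψ σ / σ ^ 2) (Ioc 0 σ₀)
    · -- integrable subcase : Ψm = 0, Ψp = smoothing of f(4·)
      set F4 : ℝ → ℝ := fun x => f (4*x) with hF4
      have hm4 : Monotone F4 := fun x y h => hfmono (by linarith)
      have hnn4 : ∀ x, 0 ≤ F4 x := fun x => hfnn _
      have hneg4 : ∀ x ≤ 0, F4 x = 0 := fun x hx => hfneg _ (by linarith)
      have hδ4 : ∀ c, 0 < c → ∃ δ, 0 < δ ∧ ∀ σ, 0 < σ → σ ≤ δ → F4 σ ≤ c * σ := by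
        intro c hc
        obtain ⟨δ, hδpos, hδ⟩ := hlim (c/4) (by linarith)
        refine ⟨δ/4, by linarith, ?_⟩
        intro σ hσ hσδ
        have := hδ (4*σ) (by linarith) (by linarith)
        simp only [hF4]
        linarith
      obtain ⟨hPmono, hPnn, hPderiv, hPcont⟩ := phi_package hm4 hnn4 hneg4 hδ4 hσ₀
      refine ⟨fun _ => 0, sm (sm F4), fun _ => 0, smD F4, ?_, hPmono, ?_, ?_, hPderiv,
        continuousOn_const, hPcont, ?_, ?_, ?_⟩
      · exact monotoneOn_const
      · intro σ _; exact le_rfl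
      · intro σ hσ
        exact hasDerivWithinAt_const σ _ 0
      · intro σ hσ
        constructor
        · exact hnonneg σ hσ
        · have h1 : F4 (σ/4) ≤ sm (sm F4) σ := phi_ge hm4 hnn4 hneg4 σ hσ.1
          have h2 : F4 (σ/4) = f σ := by
            simp only [hF4]
            norm_num
            ring_nf
          rw [h2, hfΨ σ hσ] at h1
          exact h1
      · -- the integrability implication
        intro h
        have hfInt : IntegrableOn (fun x => f x / x^2) (Ioc 0 σ₀) :=
          h.congr_fun hEq measurableSet_Ioc
        have h2 : IntegrableOn (fun x => f x / x^2) (Ioc σ₀ (4*σ₀)) := by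
          rw [← intervalIntegrable_iff_integrableOn_Ioc_of_le (by linarith)]
          exact ii_div_sq hfmono σ₀ (4*σ₀) hσ₀ (by linarith)
        have hfInt4 : IntegrableOn (fun x => f x / x^2) (Ioc 0 (4*σ₀)) := by
          have hu : Ioc (0:ℝ) σ₀ ∪ Ioc σ₀ (4*σ₀) = Ioc 0 (4*σ₀) :=
            Ioc_union_Ioc_eq_Ioc hσ₀.le (by linarith)
          rw [← hu]
          exact hfInt.union h2
        set K := ∫ x in Ioc (0:ℝ) (4*σ₀), f x / x^2 with hK
        apply phi_P1 hm4 hnn4 hneg4 hσ₀ (M := 4*K)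
        intro ε hε hεσ
        have hpt : ∀ x : ℝ, F4 x / x^2 = 16 * ((fun u => f u / u^2) (4*x)) := by
          intro x
          rcases eq_or_ne x 0 with hx | hx
          · simp [hx, hF4]
          · simp only [hF4]
            have h16 : (4*x)^2 = 16*x^2 := by ring
            rw [h16]
            field_simp
        have h1 : (∫ x in ε..σ₀, F4 x / x^2)
            = ∫ x in ε..σ₀, 16 * ((fun u => f u / u^2) (4*x)) :=
          intervalIntegral.integral_congr (fun x _ => hpt x)
        rw [h1, intervalIntegral.integral_const_mul,
          intervalIntegral.integral_comp_mul_left (fun u => f u / u^2)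
            (by norm_num : (4:ℝ) ≠ 0), smul_eq_mul]
        have h3 : (∫ u in (4*ε)..(4*σ₀), f u / u^2) ≤ K := by
          rw [intervalIntegral.integral_of_le (by linarith)]
          apply setIntegral_mono_set hfInt4
            (Filter.Eventually.of_forall (fun u => div_nonneg (hfnn u) (sq_nonneg u)))
          exact HasSubset.Subset.eventuallyLE (Ioc_subset_Ioc_left (by linarith))
        have h4 : (0:ℝ) ≤ K := by
          rw [hK]
          apply setIntegral_nonneg measurableSet_Ioc
          intro u _
          exact div_nonneg (hfnn u) (sq_nonneg u)
        nlinarith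
      · intro hn
        exact (hn hInt).elim
    · -- non-integrable subcase : Ψp = const, Ψm = smoothing of f
      obtain ⟨hPmono, hPnn, hPderiv, hPcont⟩ := phi_package hfmono hfnn hfneg hlim hσ₀
      refine ⟨sm (sm f), fun _ => B, smD f, fun _ => 0, hPmono, monotoneOn_const, hPnn,
        hPderiv, ?_, hPcont, continuousOn_const, ?_, ?_, ?_⟩
      · intro σ hσ
        exact hasDerivWithinAt_const σ _ B
      · intro σ hσ
        constructor
        · have := phi_le hfmono hfnn hfneg σ
          rw [hfΨ σ hσ] at this
          exact this
        · exact hmono hσ ⟨hσ₀.le, le_rfl⟩ hσ.2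
      · intro _; exact hzero
      · intro _ hIm
        obtain ⟨M, hM⟩ := phi_P2 hfmono hfnn hfneg hlim hσ₀ hIm
        -- conclude integrability of f/x² on (0, σ₀], contradiction
        apply hInt
        have hfInt : IntegrableOn (fun x => f x / x^2) (Ioc 0 σ₀) := by
          have hM2 : IntervalIntegrable (fun x => f x / x^2) volume (σ₀/4) σ₀ :=
            ii_div_sq hfmono (σ₀/4) σ₀ (by linarith) (by linarith)
          set M2 := ∫ x in (σ₀/4)..σ₀, f x / x^2 with hM2def
          apply integrableOn_of_bdd (M := M + M2)
            (fun x => div_nonneg (hfnn x) (sq_nonneg x))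
          · intro ε hε
            rcases le_or_gt ε σ₀ with hle | hlt
            · rw [← intervalIntegrable_iff_integrableOn_Ioc_of_le hle]
              exact ii_div_sq hfmono ε σ₀ hε hle
            · rw [Ioc_eq_empty (not_lt.mpr hlt.le)]; exact integrableOn_empty
          · intro ε hε hεσ
            set ε' := min ε (σ₀/4) with hε'def
            have hε'pos : 0 < ε' := lt_min hε (by linarith)
            have hε'le : ε' ≤ σ₀/4 := min_le_right _ _
            have hstep1 : (∫ x in Ioc ε σ₀, f x / x^2) ≤ ∫ x in Ioc ε' σ₀, f x / x^2 := by
              apply setIntegral_mono_set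
              · rw [← intervalIntegrable_iff_integrableOn_Ioc_of_le (by linarith)]
                exact ii_div_sq hfmono ε' σ₀ hε'pos (by linarith)
              · exact Filter.Eventually.of_forall (fun u => div_nonneg (hfnn u) (sq_nonneg u))
              · exact HasSubset.Subset.eventuallyLE (Ioc_subset_Ioc_left (min_le_left _ _))
            have hadd := intervalIntegral.integral_add_adjacent_intervals
              (ii_div_sq hfmono ε' (σ₀/4) hε'pos hε'le) hM2
            have hpart := hM ε' hε'pos hε'le
            rw [← intervalIntegral.integral_of_le (by linarith : ε' ≤ σ₀)] at hstep1
            rw [← hadd] at hstep1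
            linarith
        exact hfInt.congr_fun (fun σ hσ => (hEq hσ).symm) measurableSet_Ioc
  · -- CASE I : f(σ) ≥ cσ infinitely often near 0
    push_neg at hlim
    obtain ⟨c, hc, H⟩ := hlim
    have H' : ∀ δ, 0 < δ → ∃ τ, 0 < τ ∧ τ ≤ δ ∧ c * τ ≤ f τ := by
      intro δ hδ
      obtain ⟨σ, h1, h2, h3⟩ := H δ hδ
      exact ⟨σ, h1, h2, h3.le⟩
    obtain ⟨G, hGm, hGnn, hGneg, hGle, hGδ, hGdiv⟩ :=
      staircase_exists hfmono hfnn hσ₀ hc H'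
    obtain ⟨hPmono, hPnn, hPderiv, hPcont⟩ := phi_package hGm hGnn hGneg hGδ hσ₀
    refine ⟨sm (sm G), fun _ => B, smD G, fun _ => 0, hPmono, monotoneOn_const, hPnn,
      hPderiv, ?_, hPcont, continuousOn_const, ?_, ?_, ?_⟩
    · intro σ hσ
      exact hasDerivWithinAt_const σ _ B
    · intro σ hσ
      constructor
      · have h1 := (phi_le hGm hGnn hGneg σ).trans (hGle σ)
        rw [hfΨ σ hσ] at h1
        exact h1
      · exact hmono hσ ⟨hσ₀.le, le_rfl⟩ hσ.2
    · intro _; exact hzero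
    · intro _ hIm
      exact hGdiv (phi_P2 hGm hGnn hGneg hGδ hσ₀ hIm)
end

section
/- Let ω : (0,1] → (0,∞) be continuous and increasing with σ ↦ ω(σ)/σ decreasing, and define φ(s) = ∫₀^s exp(−∫_t^1 (ω(τ)/τ) dτ) dt for s ∈ [0,1]. Then φ(0) = 0, φ > 0 on (0,1], φ is twice differentiable on (0,1) and satisfies the equation −φ''(s) + (ω(s)/s)·φ'(s) = 0 for all s ∈ (0,1). Moreover, if ω is not Dini continuous at zero, i.e. ∫₀^1 (ω(τ)/τ) dτ = +∞, then the right derivative of φ at 0 equals 0, i.e. lim_{s→0⁺} φ(s)/s = 0. -/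
open MeasureTheory Real Set Filter
open scoped ENNReal Topology

noncomputable section

/-- The one-dimensional barrier `φ(s) = ∫₀^s exp(-∫_t^1 ω(τ)/τ dτ) dt`. -/
def phiBar (ω : ℝ → ℝ) (s : ℝ) : ℝ :=
  ∫ t in Set.Ioc (0 : ℝ) s, Real.exp (-(∫ τ in Set.Ioc t 1, ω τ / τ))

/-- The inner exponent. -/
def Fb (ω : ℝ → ℝ) (t : ℝ) : ℝ := ∫ τ in Set.Ioc t 1, ω τ / τ

/-- The integrand of `phiBar`. -/
def gb (ω : ℝ → ℝ) (t : ℝ) : ℝ := Real.exp (-(Fb ω t))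

lemma phiBar_eq (ω : ℝ → ℝ) (s : ℝ) : phiBar ω s = ∫ t in Set.Ioc (0 : ℝ) s, gb ω t := rfl

section aux

variable {ω : ℝ → ℝ} (hpos : ∀ σ ∈ Set.Ioc (0 : ℝ) 1, 0 < ω σ)
  (hcont : ContinuousOn ω (Set.Ioc 0 1))

include hcont in
lemma hb_contOn : ContinuousOn (fun τ => ω τ / τ) (Set.Ioc 0 1) :=
  hcont.div continuousOn_id (fun τ hτ => ne_of_gt hτ.1)

include hcont in
lemma hb_intOn {a : ℝ} (ha : 0 < a) : IntegrableOn (fun τ => ω τ / τ) (Set.Icc a 1) := by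
  rcases le_or_gt a 1 with h | h
  · exact ((hb_contOn hcont).mono (fun x hx => ⟨lt_of_lt_of_le ha hx.1, hx.2⟩)).integrableOn_compact
      isCompact_Icc
  · simp [Set.Icc_eq_empty_of_lt h]

include hpos hcont in
lemma Fb_nonneg {t : ℝ} (ht : 0 < t) : 0 ≤ Fb ω t := by
  apply setIntegral_nonneg measurableSet_Ioc
  intro τ hτ
  exact div_nonneg (hpos τ ⟨lt_trans ht hτ.1, hτ.2⟩).le (lt_trans ht hτ.1).le

include hpos hcont in
lemma Fb_anti {t s : ℝ} (ht : 0 < t) (hts : t ≤ s) (hs : s ≤ 1) : Fb ω s ≤ Fb ω t := by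
  have hIs : IntegrableOn (fun τ => ω τ / τ) (Set.Ioc s 1) :=
    (hb_intOn hcont (a := s) (lt_of_lt_of_le ht hts)).mono_set Set.Ioc_subset_Icc_self
  have hIts : IntegrableOn (fun τ => ω τ / τ) (Set.Ioc t s) :=
    (hb_intOn hcont ht).mono_set (fun x hx => ⟨hx.1.le, le_trans hx.2 hs⟩)
  have hsplit : Fb ω t = (∫ τ in Set.Ioc t s, ω τ / τ) + Fb ω s := by
    rw [Fb, ← Set.Ioc_union_Ioc_eq_Ioc hts hs,
      setIntegral_union (Set.Ioc_disjoint_Ioc_of_le le_rfl) measurableSet_Ioc hIts hIs]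
    rfl
  have hnn : 0 ≤ ∫ τ in Set.Ioc t s, ω τ / τ := by
    apply setIntegral_nonneg measurableSet_Ioc
    intro τ hτ
    exact div_nonneg (hpos τ ⟨lt_trans ht hτ.1, le_trans hτ.2 hs⟩).le (lt_trans ht hτ.1).le
  linarith

include hcont in
lemma Fb_hasDeriv {s : ℝ} (hs : s ∈ Set.Ioo (0 : ℝ) 1) :
    HasDerivAt (Fb ω) (-(ω s / s)) s := by
  have hint : IntervalIntegrable (fun τ => ω τ / τ) volume s 1 := by
    apply ContinuousOn.intervalIntegrable
    rw [Set.uIcc_of_le hs.2.le]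
    exact (hb_contOn hcont).mono (fun x hx => ⟨lt_of_lt_of_le hs.1 hx.1, hx.2⟩)
  have hco : ContinuousOn (fun τ => ω τ / τ) (Set.Ioo 0 1) :=
    (hb_contOn hcont).mono Set.Ioo_subset_Ioc_self
  have hmeas : StronglyMeasurableAtFilter (fun τ => ω τ / τ) (𝓝 s) volume :=
    hco.stronglyMeasurableAtFilter isOpen_Ioo s hs
  have hca : ContinuousAt (fun τ => ω τ / τ) s :=
    hco.continuousAt (Ioo_mem_nhds hs.1 hs.2)
  have H := intervalIntegral.integral_hasDerivAt_left hint hmeas hca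
  apply H.congr_of_eventuallyEq
  filter_upwards [Ioo_mem_nhds hs.1 hs.2] with u hu
  rw [Fb, intervalIntegral.integral_of_le hu.2.le]

include hcont in
lemma gb_hasDeriv {s : ℝ} (hs : s ∈ Set.Ioo (0 : ℝ) 1) :
    HasDerivAt (gb ω) (gb ω s * (ω s / s)) s := by
  have h1 : HasDerivAt (fun x => -(Fb ω x)) (ω s / s) s := by
    have := (Fb_hasDeriv hcont hs).neg
    exact this.congr_deriv (neg_neg _)
  exact h1.exp

include hcont in
lemma gb_contOn : ContinuousOn (gb ω) (Set.Ioo 0 1) := by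
  apply continuousOn_of_forall_continuousAt
  intro s hs
  exact (gb_hasDeriv hcont hs).continuousAt

include hpos hcont in
lemma gb_intOn {s : ℝ} (hs : s ∈ Set.Ioc (0 : ℝ) 1) : IntegrableOn (gb ω) (Set.Ioc 0 s) := by
  rw [integrableOn_Ioc_iff_integrableOn_Ioo]
  have hsub : Set.Ioo (0 : ℝ) s ⊆ Set.Ioo 0 1 := fun x hx => ⟨hx.1, lt_of_lt_of_le hx.2 hs.2⟩
  refine ⟨((gb_contOn hcont).mono hsub).aestronglyMeasurable measurableSet_Ioo, ?_⟩
  apply HasFiniteIntegral.restrict_of_bounded (C := 1) measure_Ioo_lt_top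
  filter_upwards [self_mem_ae_restrict measurableSet_Ioo] with t ht
  have habs : ‖gb ω t‖ = Real.exp (-(Fb ω t)) := by
    rw [Real.norm_eq_abs]; exact abs_of_pos (Real.exp_pos _)
  rw [habs, Real.exp_le_one_iff, neg_nonpos]
  exact Fb_nonneg hpos hcont ht.1

end aux

/-- the one-dimensional counterexample of Remark 4 / [M11]: for `ω`
continuous, increasing, with `ω(σ)/σ` decreasing, the function
`φ(s) = ∫₀^s exp(-∫_t^1 ω(τ)/τ dτ) dt` vanishes at `0`, is positive on `(0,1]` and solves
`-φ'' + (ω(s)/s) φ' = 0` on `(0,1)`; if `ω` is not Dini continuous at zero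
(`∫₀¹ ω(τ)/τ dτ = +∞`) then `φ'(0⁺) = lim_{s→0⁺} φ(s)/s = 0`. -/
theorem statement8 (ω : ℝ → ℝ) (hpos : ∀ σ ∈ Set.Ioc (0 : ℝ) 1, 0 < ω σ)
    (hcont : ContinuousOn ω (Set.Ioc 0 1)) (hmono : StrictMonoOn ω (Set.Ioc 0 1))
    (hanti : AntitoneOn (fun σ => ω σ / σ) (Set.Ioc 0 1)) :
    phiBar ω 0 = 0 ∧
    (∀ s ∈ Set.Ioc (0 : ℝ) 1, 0 < phiBar ω s) ∧
    (∃ φd φdd : ℝ → ℝ, ∀ s ∈ Set.Ioo (0 : ℝ) 1,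
      HasDerivAt (phiBar ω) (φd s) s ∧ HasDerivAt φd (φdd s) s ∧
        -φdd s + (ω s / s) * φd s = 0) ∧
    ((∫⁻ τ in Set.Ioc (0 : ℝ) 1, ENNReal.ofReal (ω τ / τ)) = ⊤ →
      Tendsto (fun s => phiBar ω s / s) (𝓝[>] (0 : ℝ)) (𝓝 0)) := by
  refine ⟨?_, ?_, ?_, ?_⟩
  · simp [phiBar]
  · -- positivity
    intro s hs
    rw [phiBar_eq, integral_Ioc_eq_integral_Ioo]
    have h1 : 0 ≤ᵐ[volume.restrict (Set.Ioo (0:ℝ) s)] gb ω :=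
      Filter.Eventually.of_forall (fun t => (Real.exp_pos _).le)
    rw [setIntegral_pos_iff_support_of_nonneg_ae h1
        ((gb_intOn hpos hcont hs).mono_set Set.Ioo_subset_Ioc_self)]
    have : Function.support (gb ω) ∩ Set.Ioo 0 s = Set.Ioo 0 s :=
      Set.inter_eq_right.mpr (fun t _ => Real.exp_ne_zero _)
    rw [this, Real.volume_Ioo]
    simpa using hs.1
  · -- the ODE
    refine ⟨gb ω, fun s => gb ω s * (ω s / s), fun s hs => ?_⟩
    refine ⟨?_, gb_hasDeriv hcont hs, by ring⟩
    have hint : IntervalIntegrable (gb ω) volume 0 s := by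
      rw [intervalIntegrable_iff_integrableOn_Ioc_of_le hs.1.le]
      exact gb_intOn hpos hcont ⟨hs.1, hs.2.le⟩
    have hmeas : StronglyMeasurableAtFilter (gb ω) (𝓝 s) volume :=
      (gb_contOn hcont).stronglyMeasurableAtFilter isOpen_Ioo s hs
    have hca : ContinuousAt (gb ω) s :=
      (gb_contOn hcont).continuousAt (Ioo_mem_nhds hs.1 hs.2)
    have H := intervalIntegral.integral_hasDerivAt_right hint hmeas hca
    apply H.congr_of_eventuallyEq
    filter_upwards [Ioi_mem_nhds hs.1] with u hu
    rw [phiBar_eq, intervalIntegral.integral_of_le (le_of_lt hu)]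
  · -- non-Dini ⇒ zero right derivative
    intro hdini
    -- Step 1 : Fb tends to +∞ at 0⁺
    have hfae : AEMeasurable (fun τ => ENNReal.ofReal (ω τ / τ))
        (volume.restrict (Set.Ioc (0:ℝ) 1)) :=
      ENNReal.measurable_ofReal.comp_aemeasurable
        ((hb_contOn hcont).aemeasurable measurableSet_Ioc)
    set f' := hfae.mk _ with hf'def
    have hff' : (fun τ => ENNReal.ofReal (ω τ / τ)) =ᵐ[volume.restrict (Set.Ioc (0:ℝ) 1)] f' :=
      hfae.ae_eq_mk
    set ν := (volume.restrict (Set.Ioc (0:ℝ) 1)).withDensity f' with hνdef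
    have key : ∀ S : Set ℝ, MeasurableSet S → S ⊆ Set.Ioc (0:ℝ) 1 →
        ν S = ∫⁻ τ in S, ENNReal.ofReal (ω τ / τ) := by
      intro S hS hsub
      rw [hνdef, withDensity_apply _ hS, Measure.restrict_restrict hS,
        Set.inter_eq_left.mpr hsub]
      exact lintegral_congr_ae
        ((hff'.symm).filter_mono (ae_mono (Measure.restrict_mono hsub le_rfl)))
    have hν_top : ν (Set.Ioc (0:ℝ) 1) = ⊤ := by
      rw [key _ measurableSet_Ioc subset_rfl]; exact hdini
    have hS_mono : Monotone (fun n : ℕ => Set.Ioc (1/(n+1) : ℝ) 1) := by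
      intro m n hmn
      apply Set.Ioc_subset_Ioc_left
      apply one_div_le_one_div_of_le (by positivity)
      have : (m:ℝ) ≤ (n:ℝ) := Nat.cast_le.mpr hmn
      linarith
    have hUnion : (⋃ n : ℕ, Set.Ioc (1/(n+1) : ℝ) 1) = Set.Ioc (0:ℝ) 1 := by
      ext x
      simp only [Set.mem_iUnion, Set.mem_Ioc]
      constructor
      · rintro ⟨n, h1, h2⟩
        exact ⟨lt_trans (by positivity) h1, h2⟩
      · rintro ⟨h1, h2⟩
        obtain ⟨n, hn⟩ := exists_nat_one_div_lt h1
        exact ⟨n, hn, h2⟩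
    have hsup : (⨆ n : ℕ, ν (Set.Ioc (1/(n+1) : ℝ) 1)) = ⊤ := by
      rw [← hS_mono.directed_le.measure_iUnion, hUnion, hν_top]
    have hexists : ∀ M : ℝ, ∃ s₀ ∈ Set.Ioc (0:ℝ) 1, M ≤ Fb ω s₀ := by
      intro M
      have hlt : ENNReal.ofReal (max M 0) < ⨆ n : ℕ, ν (Set.Ioc (1/(n+1) : ℝ) 1) := by
        rw [hsup]; exact ENNReal.ofReal_lt_top
      obtain ⟨n, hn⟩ := lt_iSup_iff.mp hlt
      set s₀ : ℝ := 1/(n+1) with hs₀def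
      have hs₀pos : (0:ℝ) < s₀ := by positivity
      have hs₀le : s₀ ≤ 1 := by
        rw [hs₀def, div_le_one (by positivity)]
        linarith [Nat.cast_nonneg (α := ℝ) n]
      refine ⟨s₀, ⟨hs₀pos, hs₀le⟩, ?_⟩
      have hIs : IntegrableOn (fun τ => ω τ / τ) (Set.Ioc s₀ 1) :=
        (hb_intOn hcont hs₀pos).mono_set Set.Ioc_subset_Icc_self
      have hnn : 0 ≤ᵐ[volume.restrict (Set.Ioc s₀ 1)] (fun τ => ω τ / τ) := by
        filter_upwards [self_mem_ae_restrict measurableSet_Ioc] with τ hτ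
        exact div_nonneg (hpos τ ⟨lt_trans hs₀pos hτ.1, hτ.2⟩).le (lt_trans hs₀pos hτ.1).le
      have heq : ENNReal.ofReal (Fb ω s₀) = ν (Set.Ioc s₀ 1) := by
        rw [key _ measurableSet_Ioc (Set.Ioc_subset_Ioc_left hs₀pos.le)]
        exact ofReal_integral_eq_lintegral_ofReal hIs hnn
      rw [← heq] at hn
      have := (ENNReal.ofReal_lt_ofReal_iff_of_nonneg (le_max_right M 0)).mp hn
      exact le_trans (le_max_left M 0) this.le
    have hF_top : Tendsto (Fb ω) (𝓝[>] (0:ℝ)) atTop := by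
      rw [tendsto_atTop]
      intro M
      obtain ⟨s₀, hs₀, hM⟩ := hexists M
      filter_upwards [Ioo_mem_nhdsGT_of_mem (Set.mem_Ico.mpr ⟨le_refl 0, hs₀.1⟩)] with s hs
      exact hM.trans (Fb_anti hpos hcont hs.1 hs.2.le hs₀.2)
    have hg0 : Tendsto (gb ω) (𝓝[>] (0:ℝ)) (𝓝 0) :=
      Real.tendsto_exp_neg_atTop_nhds_zero.comp hF_top
    -- Step 2 : squeeze
    apply tendsto_of_tendsto_of_tendsto_of_le_of_le' tendsto_const_nhds hg0
    · filter_upwards [self_mem_nhdsWithin] with s hs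
      apply div_nonneg _ (le_of_lt hs)
      rw [phiBar_eq]
      exact setIntegral_nonneg measurableSet_Ioc (fun t _ => (Real.exp_pos _).le)
    · filter_upwards [Ioo_mem_nhdsGT_of_mem (Set.mem_Ico.mpr ⟨le_refl (0:ℝ), one_pos⟩)]
        with s hs
      have hle : phiBar ω s ≤ s * gb ω s := by
        have h1 : phiBar ω s ≤ ∫ _ in Set.Ioc (0:ℝ) s, gb ω s := by
          rw [phiBar_eq]
          apply setIntegral_mono_on (gb_intOn hpos hcont ⟨hs.1, hs.2.le⟩)
            (integrableOn_const measure_Ioc_lt_top.ne) measurableSet_Ioc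
          intro t ht
          rw [gb, gb, Real.exp_le_exp, neg_le_neg_iff]
          exact Fb_anti hpos hcont ht.1 ht.2 hs.2.le
        rw [setIntegral_const, Real.volume_real_Ioc_of_le hs.1.le, smul_eq_mul] at h1
        linarith [h1]
      rw [div_le_iff₀ hs.1]
      linarith [hle]
end
end
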